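/- arXiv:1302.0979 — 2 statements merged into one kernel-verified Lean document; each statement's English description precedes it below -/
import Mathlib

section
/- Let R be a commutative ring, Λ an associative unital R-algebra, and τ : Λ → Λ an R-linear involution. Assume: (a) Λ is τ-smooth, i.e. every x ∈ Λ with τ(x) = x can be written x = z + τ(z) for some z ∈ Λ; and (b) Sym(Λ,τ) is a direct summand of Λ as an R-module. Let C be a commutative R-algebra, let I ⊆ C be an ideal with I² = 0, and let σ := τ ⊗ id denote the induced involution of Λ ⊗_R C. If y is a unit of Λ ⊗_R C such that σ(y)·y − 1 lies in the ideal I·(Λ ⊗_R C), then there exists a unit y' of Λ ⊗_R C with σ(y')·y' = 1 and y' − y ∈ I·(Λ ⊗_R C). -/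
open scoped TensorProduct

theorem unit_lifting_along_square_zero_ideal_for_tau_smooth_algebras
    (R : Type) [CommRing R] (Λ : Type) [Ring Λ] [Algebra R Λ]
    -- `τ` is an `R`-linear involution of `Λ`
    (τ : Λ →ₗ[R] Λ)
    (hτmul : ∀ x y : Λ, τ (x * y) = τ y * τ x)
    (hτinv : ∀ x : Λ, τ (τ x) = x)
    -- (a) `Λ` is `τ`-smooth
    (hsmooth : ∀ x : Λ, τ x = x → ∃ z : Λ, x = z + τ z)
    -- (b) `Sym(Λ,τ)` is a direct summand of `Λ` as an `R`-module
    (hsummand : ∃ q : Submodule R Λ, IsCompl (LinearMap.ker (τ - LinearMap.id)) q)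
    (C : Type) [CommRing C] [Algebra R C]
    (I : Ideal C) (hI : I ^ 2 = ⊥)
    (y : (C ⊗[R] Λ)ˣ)
    (hy : (LinearMap.baseChange C τ) (y : C ⊗[R] Λ) * (y : C ⊗[R] Λ) - 1 ∈
      I • (⊤ : Submodule C (C ⊗[R] Λ))) :
    ∃ y' : (C ⊗[R] Λ)ˣ,
      (LinearMap.baseChange C τ) (y' : C ⊗[R] Λ) * (y' : C ⊗[R] Λ) = 1 ∧
      ((y' : C ⊗[R] Λ) - (y : C ⊗[R] Λ)) ∈ I • (⊤ : Submodule C (C ⊗[R] Λ)) := by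
  classical
  set σ := LinearMap.baseChange C τ with hσdef
  set S := LinearMap.ker (τ - LinearMap.id) with hSdef
  set J := I • (⊤ : Submodule C (C ⊗[R] Λ)) with hJdef
  -- membership in S
  have hSmem : ∀ {x : Λ}, x ∈ S ↔ τ x = x := by
    intro x
    simp [hSdef, LinearMap.mem_ker, LinearMap.sub_apply, sub_eq_zero]
  -- τ 1 = 1
  have hτ1 : τ (1 : Λ) = 1 := by
    have h1 := hτmul 1 (τ 1)
    rw [one_mul, hτinv] at h1
    simpa using h1.symm
  -- σ is an anti-homomorphism
  have hσmul : ∀ a b : C ⊗[R] Λ, σ (a * b) = σ b * σ a := by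
    intro a b
    induction a using TensorProduct.induction_on with
    | zero => simp
    | tmul c l =>
        induction b using TensorProduct.induction_on with
        | zero => simp
        | tmul d m =>
            simp [hσdef, Algebra.TensorProduct.tmul_mul_tmul,
              LinearMap.baseChange_tmul, hτmul, mul_comm c d]
        | add x z hx hz => simp [mul_add, add_mul, hx, hz]
    | add x z hx hz => simp [mul_add, add_mul, hx, hz]
  have hσ1 : σ (1 : C ⊗[R] Λ) = 1 := by
    rw [Algebra.TensorProduct.one_def, hσdef, LinearMap.baseChange_tmul, hτ1]
  -- products of elements of J vanish
  have hJJ : ∀ a ∈ J, ∀ b ∈ J, a * b = 0 := by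
    intro a ha b hb
    refine Submodule.smul_induction_on ha ?_ ?_
    · intro r hr n _
      refine Submodule.smul_induction_on hb ?_ ?_
      · intro s hs m _
        have hrs : r * s = 0 := by
          have : r * s ∈ I ^ 2 := by
            rw [sq]; exact Ideal.mul_mem_mul hr hs
          rw [hI] at this
          simpa using this
        calc (r • n) * (s • m) = (r * s) • (n * m) := by
              rw [smul_mul_assoc, mul_smul_comm, smul_smul]
          _ = 0 := by rw [hrs, zero_smul]
      · intro u v hu hv
        rw [mul_add, hu, hv, add_zero]
    · intro u v hu hv
      rw [add_mul, hu, hv, add_zero]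
  -- J is a left ideal
  have hJmul_left : ∀ (x : C ⊗[R] Λ), ∀ a ∈ J, x * a ∈ J := by
    intro x a ha
    refine Submodule.smul_induction_on ha ?_ ?_
    · intro r hr n _
      rw [mul_smul_comm]
      exact Submodule.smul_mem_smul hr Submodule.mem_top
    · intro u v hu hv
      rw [mul_add]
      exact Submodule.add_mem _ hu hv
  -- J is stable under σ
  have hσJ : ∀ a ∈ J, σ a ∈ J := by
    intro a ha
    refine Submodule.smul_induction_on ha ?_ ?_
    · intro r hr n _
      rw [map_smul]
      exact Submodule.smul_mem_smul hr Submodule.mem_top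
    · intro u v hu hv
      rw [map_add]
      exact Submodule.add_mem _ hu hv
  -- the base change of S
  set SC := Submodule.baseChange C S with hSCdef
  -- cross terms land in SC
  have hcross : ∀ a b : C ⊗[R] Λ, σ a * b + σ b * a ∈ SC := by
    intro a b
    induction a using TensorProduct.induction_on with
    | zero => simpa using Submodule.zero_mem SC
    | tmul c l =>
        induction b using TensorProduct.induction_on with
        | zero => simpa using Submodule.zero_mem SC
        | tmul d m =>
            have e1 : σ (c ⊗ₜ[R] l) * (d ⊗ₜ[R] m) + σ (d ⊗ₜ[R] m) * (c ⊗ₜ[R] l)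
                = (c * d) ⊗ₜ[R] (τ l * m + τ m * l) := by
              simp [hσdef, LinearMap.baseChange_tmul,
                Algebra.TensorProduct.tmul_mul_tmul, TensorProduct.tmul_add,
                mul_comm d c]
            rw [e1]
            refine Submodule.tmul_mem_baseChange_of_mem _ ?_
            rw [hSmem]
            rw [map_add, hτmul, hτmul, hτinv, hτinv, add_comm]
        | add u v hu hv =>
            have e2 : σ (c ⊗ₜ[R] l) * (u + v) + σ (u + v) * (c ⊗ₜ[R] l)
                = (σ (c ⊗ₜ[R] l) * u + σ u * (c ⊗ₜ[R] l))
                  + (σ (c ⊗ₜ[R] l) * v + σ v * (c ⊗ₜ[R] l)) := by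
              rw [map_add]; noncomm_ring
            rw [e2]
            exact Submodule.add_mem _ hu hv
    | add u v hu hv =>
        have e3 : σ (u + v) * b + σ b * (u + v)
            = (σ u * b + σ b * u) + (σ v * b + σ b * v) := by
          rw [map_add]; noncomm_ring
        rw [e3]
        exact Submodule.add_mem _ hu hv
  -- norms land in SC
  have hnorm : ∀ a : C ⊗[R] Λ, σ a * a ∈ SC := by
    intro a
    induction a using TensorProduct.induction_on with
    | zero => simpa using Submodule.zero_mem SC
    | tmul c l =>
        have e4 : σ (c ⊗ₜ[R] l) * (c ⊗ₜ[R] l) = (c * c) ⊗ₜ[R] (τ l * l) := by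
          simp [hσdef, LinearMap.baseChange_tmul, Algebra.TensorProduct.tmul_mul_tmul]
        rw [e4]
        refine Submodule.tmul_mem_baseChange_of_mem _ ?_
        rw [hSmem, hτmul, hτinv]
    | add u v hu hv =>
        have e5 : σ (u + v) * (u + v)
            = (σ u * u + σ v * v) + (σ u * v + σ v * u) := by
          rw [map_add]; noncomm_ring
        rw [e5]
        exact Submodule.add_mem _ (Submodule.add_mem _ hu hv) (hcross u v)
  -- the projection onto S
  obtain ⟨q, hq⟩ := hsummand
  set P : Λ →ₗ[R] Λ := S.subtype.comp (S.projectionOnto q hq) with hPdef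
  have hPS : ∀ x : Λ, P x ∈ S := fun x => (S.projectionOnto q hq x).2
  have hPid : ∀ x ∈ S, P x = x := by
    intro x hx
    have h5 := congrArg (Subtype.val)
      (Submodule.projectionOnto_apply_left hq ⟨x, hx⟩)
    exact h5
  set PC := LinearMap.baseChange C P with hPCdef
  -- PC is the identity on SC
  have hPCid : ∀ x ∈ SC, PC x = x := by
    intro x hx
    rw [hSCdef, Submodule.baseChange_eq_span] at hx
    refine Submodule.span_induction ?_ ?_ ?_ ?_ hx
    · rintro z ⟨m, hm, rfl⟩
      simp [hPCdef, LinearMap.baseChange_tmul, hPid m hm]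
    · simp
    · intro u v _ _ hu hv
      rw [map_add, hu, hv]
    · intro c u _ hu
      rw [map_smul, hu]
  -- smoothness after base change, composed with PC
  have hsmoothC : ∀ n : C ⊗[R] Λ, ∃ h : C ⊗[R] Λ, h + σ h = PC n := by
    intro n
    induction n using TensorProduct.induction_on with
    | zero => exact ⟨0, by simp⟩
    | tmul c l =>
        have hPl : τ (P l) = P l := hSmem.mp (hPS l)
        obtain ⟨z, hz⟩ := hsmooth (P l) hPl
        refine ⟨c ⊗ₜ[R] z, ?_⟩
        rw [hσdef, hPCdef, LinearMap.baseChange_tmul, LinearMap.baseChange_tmul,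
          ← TensorProduct.tmul_add, ← hz]
    | add u v hu hv =>
        obtain ⟨h₁, hh₁⟩ := hu
        obtain ⟨h₂, hh₂⟩ := hv
        refine ⟨h₁ + h₂, ?_⟩
        rw [map_add, map_add, ← hh₁, ← hh₂]
        abel
  -- every element of J has PC-image of the form h + σ h with h ∈ J
  have hJsmooth : ∀ x ∈ J, ∃ h ∈ J, h + σ h = PC x := by
    intro x hx
    refine Submodule.smul_induction_on hx ?_ ?_
    · intro r hr n _
      obtain ⟨h, hh⟩ := hsmoothC n
      refine ⟨r • h, Submodule.smul_mem_smul hr Submodule.mem_top, ?_⟩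
      rw [map_smul, map_smul, ← smul_add, hh]
    · rintro u v ⟨h₁, hh₁J, hh₁⟩ ⟨h₂, hh₂J, hh₂⟩
      refine ⟨h₁ + h₂, Submodule.add_mem _ hh₁J hh₂J, ?_⟩
      rw [map_add, map_add, ← hh₁, ← hh₂]
      abel
  -- the defect ε
  set a : C ⊗[R] Λ := (y : C ⊗[R] Λ) with hadef
  set ε : C ⊗[R] Λ := σ a * a - 1 with hεdef
  have hεJ : ε ∈ J := hy
  have hεSC : ε ∈ SC := by
    refine Submodule.sub_mem _ (hnorm a) ?_
    rw [Algebra.TensorProduct.one_def]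
    exact Submodule.tmul_mem_baseChange_of_mem _ (hSmem.mpr hτ1)
  obtain ⟨h, hhJ, hh⟩ := hJsmooth ε hεJ
  rw [hPCid ε hεSC] at hh
  -- the correction unit 1 - h
  have hhh : h * h = 0 := hJJ h hhJ h hhJ
  have hεh : ε * h = 0 := hJJ ε hεJ h hhJ
  have hσhJ : σ h ∈ J := hσJ h hhJ
  have hσhε : σ h * ε = 0 := hJJ (σ h) hσhJ ε hεJ
  have hσhh : σ h * h = 0 := hJJ (σ h) hσhJ h hhJ
  set u : (C ⊗[R] Λ)ˣ :=
    ⟨1 - h, 1 + h,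
      by rw [show (1 - h) * (1 + h) = 1 + (h * h - h * h) - h * h by noncomm_ring,
           hhh]; simp,
      by rw [show (1 + h) * (1 - h) = 1 + (h * h - h * h) - h * h by noncomm_ring,
           hhh]; simp⟩ with hudef
  refine ⟨y * u, ?_, ?_⟩
  · have hyu : ((y * u : (C ⊗[R] Λ)ˣ) : C ⊗[R] Λ) = a * (1 - h) := rfl
    rw [hyu, hσmul]
    have hσ1h : σ (1 - h) = 1 - σ h := by rw [map_sub, hσ1]
    rw [hσ1h]
    have hv : σ a * a = 1 + ε := by rw [hεdef]; abel
    calc (1 - σ h) * σ a * (a * (1 - h))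
        = (1 - σ h) * ((σ a * a) * (1 - h)) := by noncomm_ring
      _ = (1 - σ h) * ((1 + ε) * (1 - h)) := by rw [hv]
      _ = 1 + ε - (h + σ h) - ε * h - σ h * ε + σ h * h + σ h * (ε * h) := by
          noncomm_ring
      _ = 1 := by rw [hh, hεh, hσhε, hσhh, mul_zero]; abel
  · have hyu : ((y * u : (C ⊗[R] Λ)ˣ) : C ⊗[R] Λ) = a * (1 - h) := rfl
    rw [hyu]
    have e6 : a * (1 - h) - a = -(a * h) := by noncomm_ring
    rw [e6]
    exact Submodule.neg_mem _ (hJmul_left a h hhJ)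
end

section
/- Let R be a commutative ring, Λ an associative unital R-algebra, and τ : Λ → Λ an R-linear involution. Let C be a commutative R-algebra, let σ := τ ⊗ id be the induced map on Λ ⊗_R C, and let E_C ⊆ Λ ⊗_R C denote the R-submodule (equivalently C-submodule) generated by all elements e ⊗ c with e ∈ Sym(Λ,τ) and c ∈ C. Then for every y ∈ Λ ⊗_R C and every x ∈ E_C, the element σ(y)·x·y lies in E_C. -/
open scoped TensorProduct

theorem symmetric_part_stable_under_twisted_conjugation
    (R : Type) [CommRing R] (Λ : Type) [Ring Λ] [Algebra R Λ]
    -- `τ` is an `R`-linear involution of `Λ`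
    (τ : Λ →ₗ[R] Λ)
    (hτmul : ∀ x y : Λ, τ (x * y) = τ y * τ x)
    (hτinv : ∀ x : Λ, τ (τ x) = x)
    (C : Type) [CommRing C] [Algebra R C]
    (y x : C ⊗[R] Λ)
    (hx : x ∈ Submodule.span C
      {z : C ⊗[R] Λ | ∃ (c : C) (e : Λ), τ e = e ∧ z = c ⊗ₜ[R] e}) :
    (LinearMap.baseChange C τ) y * x * y ∈ Submodule.span C
      {z : C ⊗[R] Λ | ∃ (c : C) (e : Λ), τ e = e ∧ z = c ⊗ₜ[R] e} := by
  set σ := LinearMap.baseChange C τ with hσdef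
  set E := Submodule.span C {z : C ⊗[R] Λ | ∃ (c : C) (e : Λ), τ e = e ∧ z = c ⊗ₜ[R] e}
    with hEdef
  -- σ is anti-multiplicative
  have hanti : ∀ a b : C ⊗[R] Λ, σ (a * b) = σ b * σ a := by
    intro a
    induction a using TensorProduct.induction_on with
    | zero => intro b; simp
    | tmul c u =>
      intro b
      induction b using TensorProduct.induction_on with
      | zero => simp
      | tmul d v =>
        simp [hσdef, Algebra.TensorProduct.tmul_mul_tmul, hτmul, mul_comm c d]
      | add b₁ b₂ h1 h2 => simp [mul_add, add_mul, h1, h2]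
    | add a₁ a₂ h1 h2 =>
      intro b
      simp [mul_add, add_mul, h1 b, h2 b]
  -- σ is an involution
  have hinv : ∀ z : C ⊗[R] Λ, σ (σ z) = z := by
    intro z
    induction z using TensorProduct.induction_on with
    | zero => simp
    | tmul c u => simp [hσdef, hτinv]
    | add z₁ z₂ h1 h2 => simp [h1, h2]
  -- σ fixes E pointwise
  have hfix : ∀ x ∈ E, σ x = x := by
    intro x hxE
    refine Submodule.span_induction ?_ ?_ ?_ ?_ hxE
    · rintro z ⟨c, e, he, rfl⟩
      simp [hσdef, he]
    · simp
    · intro a b _ _ ha hb; simp [ha, hb]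
    · intro r a _ ha; simp [ha]
  -- z + σ z ∈ E for all z
  have hL : ∀ z : C ⊗[R] Λ, z + σ z ∈ E := by
    intro z
    induction z using TensorProduct.induction_on with
    | zero => simpa using Submodule.zero_mem E
    | tmul c u =>
      have h1 : (c ⊗ₜ[R] u) + σ (c ⊗ₜ[R] u) = c ⊗ₜ[R] (u + τ u) := by
        simp [hσdef, TensorProduct.tmul_add]
      rw [h1]
      exact Submodule.subset_span ⟨c, u + τ u, by simp [hτinv, add_comm], rfl⟩
    | add z₁ z₂ h1 h2 =>
      have h3 : (z₁ + z₂) + σ (z₁ + z₂) = (z₁ + σ z₁) + (z₂ + σ z₂) := by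
        rw [map_add]; abel
      rw [h3]
      exact Submodule.add_mem E h1 h2
  -- the simple-tensor case
  have hsimple : ∀ (c : C) (u : Λ), ∀ x ∈ E, σ (c ⊗ₜ[R] u) * x * (c ⊗ₜ[R] u) ∈ E := by
    intro c u x hxE
    refine Submodule.span_induction ?_ ?_ ?_ ?_ hxE
    · rintro z ⟨d, e, he, rfl⟩
      have h1 : σ (c ⊗ₜ[R] u) * (d ⊗ₜ[R] e) * (c ⊗ₜ[R] u)
          = (c * d * c) ⊗ₜ[R] (τ u * e * u) := by
        simp [hσdef, Algebra.TensorProduct.tmul_mul_tmul]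
      rw [h1]
      refine Submodule.subset_span ⟨c * d * c, τ u * e * u, ?_, rfl⟩
      rw [hτmul, hτmul, hτinv, he, mul_assoc]
    · simp
    · intro a b _ _ ha hb
      have : σ (c ⊗ₜ[R] u) * (a + b) * (c ⊗ₜ[R] u)
          = σ (c ⊗ₜ[R] u) * a * (c ⊗ₜ[R] u) + σ (c ⊗ₜ[R] u) * b * (c ⊗ₜ[R] u) := by
        rw [mul_add, add_mul]
      rw [this]; exact Submodule.add_mem E ha hb
    · intro r a _ ha
      have : σ (c ⊗ₜ[R] u) * (r • a) * (c ⊗ₜ[R] u)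
          = r • (σ (c ⊗ₜ[R] u) * a * (c ⊗ₜ[R] u)) := by
        rw [mul_smul_comm, smul_mul_assoc]
      rw [this]; exact Submodule.smul_mem E r ha
  induction y using TensorProduct.induction_on with
  | zero => simpa using Submodule.zero_mem E
  | tmul c u => exact hsimple c u x hx
  | add y₁ y₂ h1 h2 =>
    have hx' : σ x = x := hfix x hx
    have hcross : σ (σ y₁ * x * y₂) = σ y₂ * x * y₁ := by
      rw [hanti, hanti, hx', hinv, mul_assoc]
    have key : σ (y₁ + y₂) * x * (y₁ + y₂)
        = (σ y₁ * x * y₁ + σ y₂ * x * y₂) + (σ y₁ * x * y₂ + σ (σ y₁ * x * y₂)) := by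
      rw [hcross, map_add, add_mul, add_mul, mul_add, mul_add]
      abel
    rw [key]
    exact Submodule.add_mem E (Submodule.add_mem E h1 h2) (hL _)
end
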